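/- Learning-augmented guarantee (single step): with OPT an optimal size-b selection and A an advice set of size b, for each i ∈ {0,…,b} let A_i ⊆ A with |A_i| = i and let B_i be a greedy completion of size b − i maximizing marginal gain over f(· ∪ A_i). Then the best of the resulting sets U_i = A_i ⊎ B_i satisfies f(U) ≥ max_{i ∈ {0,…,b}} [ f(A_i) + (1 − 1/e)/⌈|OPT \ A_i|/(b−i)⌉ · (f(OPT ∪ A_i) − f(A_i)) ], assuming the classical greedy guarantee f(B_i ∪ A_i) − f(A_i) ≥ (1 − 1/e)·(f(OPT'_i ∪ A_i) − f(A_i)) where OPT'_i is the optimal size-(b−i) completion of A_i. -/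

import Mathlib

open Finset

lemma submod_sets {V : Type*} [DecidableEq V] (f : Finset V → ℝ)
    (hmono : ∀ A B : Finset V, A ⊆ B → f A ≤ f B)
    (hsub : ∀ (A B : Finset V) (e : V), A ⊆ B → e ∉ B →
      f (insert e B) - f B ≤ f (insert e A) - f A) :
    ∀ (X A B : Finset V), A ⊆ B → f (X ∪ B) - f B ≤ f (X ∪ A) - f A := by
  intro X
  induction X using Finset.induction_on with
  | empty => intro A B h; simp
  | @insert e X' he ih =>
    intro A B hAB
    have h1 : f (X' ∪ B) - f B ≤ f (X' ∪ A) - f A := ih A B hAB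
    have key : f (insert e (X' ∪ B)) - f (X' ∪ B) ≤ f (insert e (X' ∪ A)) - f (X' ∪ A) := by
      by_cases hB : e ∈ X' ∪ B
      · have : insert e (X' ∪ B) = X' ∪ B := Finset.insert_eq_self.2 hB
        rw [this]
        have := hmono (X' ∪ A) (insert e (X' ∪ A)) (Finset.subset_insert _ _)
        linarith
      · exact hsub (X' ∪ A) (X' ∪ B) e (Finset.union_subset_union_right hAB) hB
    rw [Finset.insert_union, Finset.insert_union] at *
    linarith


lemma exists_good_part {V : Type*} [DecidableEq V] (f : Finset V → ℝ)
    (hmono : ∀ A B : Finset V, A ⊆ B → f A ≤ f B)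
    (hsub : ∀ (A B : Finset V) (e : V), A ⊆ B → e ∉ B →
      f (insert e B) - f B ≤ f (insert e A) - f A)
    (C : Finset V) (k : ℕ) (hk : 0 < k) :
    ∀ n : ℕ, ∀ S : Finset V, S.card = n →
    ∃ P, P ⊆ S ∧ P.card ≤ k ∧
      f (S ∪ C) - f C ≤ (⌈(S.card : ℝ) / (k : ℝ)⌉ : ℝ) * (f (P ∪ C) - f C) := by
  intro n
  induction n using Nat.strong_induction_on with
  | _ n ih =>
    intro S hS
    by_cases hle : S.card ≤ k
    · rcases Nat.eq_zero_or_pos S.card with h0 | hpos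
      · refine ⟨∅, Finset.empty_subset _, by simp [hk.le, hk], ?_⟩
        have : S = ∅ := Finset.card_eq_zero.1 h0
        simp [this, h0]
      · refine ⟨S, le_refl _, hle, ?_⟩
        have hc : ⌈(S.card : ℝ) / (k : ℝ)⌉ = 1 := by
          have h1 : (0:ℝ) < (S.card:ℝ)/(k:ℝ) :=
            div_pos (by exact_mod_cast hpos) (by positivity)
          have h2 : (S.card:ℝ)/(k:ℝ) ≤ 1 := by
            rw [div_le_one (by positivity)]; exact_mod_cast hle
          exact Int.ceil_eq_iff.2 ⟨by push_cast; linarith, by push_cast; linarith⟩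
        rw [hc]; norm_num
    · push_neg at hle
      obtain ⟨P, hPS, hPcard⟩ := Finset.exists_subset_card_eq hle.le
      set S' := S \ P with hS'def
      have hS'card : S'.card = S.card - k := by
        rw [hS'def, Finset.card_sdiff_of_subset hPS, hPcard]
      have hlt : S'.card < n := by
        rw [hS'card, ← hS]; omega
      obtain ⟨P', hP'S', hP'card, hP'⟩ := ih S'.card hlt S' rfl
      -- ceil arithmetic
      have hkne : ((k:ℝ)) ≠ 0 := by positivity
      have hceil : ⌈(S'.card : ℝ) / (k : ℝ)⌉ = ⌈(S.card : ℝ) / (k : ℝ)⌉ - 1 := by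
        rw [hS'card, Nat.cast_sub hle.le, sub_div, div_self hkne, Int.ceil_sub_one]
      have hc1 : (1:ℤ) ≤ ⌈(S.card : ℝ) / (k : ℝ)⌉ := by
        have : (0:ℝ) < (S.card : ℝ) / (k : ℝ) := by
          have hp : 0 < S.card := by omega
          apply div_pos
          · exact_mod_cast hp
          · positivity
        exact Int.ceil_pos.2 this
      set c : ℝ := (⌈(S.card : ℝ) / (k : ℝ)⌉ : ℝ) with hcdef
      have hc1' : (1:ℝ) ≤ c := by rw [hcdef]; exact_mod_cast hc1
      -- submodularity step: f (S ∪ C) - f (S' ∪ C) ≤ f (P ∪ C) - f C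
      have hSC : S ∪ C = P ∪ (S' ∪ C) := by
        rw [← Finset.union_assoc, hS'def, Finset.union_sdiff_self_eq_union,
          Finset.union_eq_right.2 hPS]
      have hstep : f (S ∪ C) - f (S' ∪ C) ≤ f (P ∪ C) - f C := by
        rw [hSC]
        exact submod_sets f hmono hsub P C (S' ∪ C) Finset.subset_union_right
      have hP'bound : f (S' ∪ C) - f C ≤ (c - 1) * (f (P' ∪ C) - f C) := by
        rw [hceil] at hP'
        push_cast at hP'
        linarith
      -- pick the better of P, P'
      by_cases hQ : f (P ∪ C) ≤ f (P' ∪ C)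
      · refine ⟨P', hP'S'.trans (Finset.sdiff_subset), hP'card, ?_⟩
        nlinarith [hstep, hP'bound, hQ]
      · push_neg at hQ
        refine ⟨P, hPS, hPcard.le, ?_⟩
        have hnn : 0 ≤ f (P' ∪ C) - f C := by
          have := hmono C (P' ∪ C) Finset.subset_union_right
          linarith
        nlinarith [hstep, hP'bound, hQ, hnn]


/-- learning-augmented single-step guarantee. With `OPT` an optimal
size-`b` selection, advice `A` of size `b`, nested-size subsets `A_i ⊆ A` with
`|A_i| = i`, and greedy completions `B_i` of size `b − i` satisfying the classical
`(1 − 1/e)` greedy guarantee against any size-`(b−i)` completion, the best set `U` among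
the `U_i = A_i ⊎ B_i` satisfies, for every `i`,
`f(U) ≥ f(A_i) + (1 − 1/e)/⌈|OPT \ A_i|/(b−i)⌉ · (f(OPT ∪ A_i) − f(A_i))`. -/
theorem learning_augmented_single_step
    {V : Type*} [Fintype V] [DecidableEq V]
    (f : Finset V → ℝ)
    (hmono : ∀ A B : Finset V, A ⊆ B → f A ≤ f B)
    (hsub : ∀ (A B : Finset V) (e : V), A ⊆ B → e ∉ B →
      f (insert e B) - f B ≤ f (insert e A) - f A)
    (b : ℕ) (hb : 0 < b)
    (OPT A : Finset V) (hOPTcard : OPT.card = b) (hAcard : A.card = b)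
    (hOPTopt : ∀ T : Finset V, T.card ≤ b → f T ≤ f OPT)
    (As Bs : Fin (b + 1) → Finset V)
    (hAsub : ∀ i, As i ⊆ A) (hAscard : ∀ i : Fin (b + 1), (As i).card = i)
    (hBdisj : ∀ i, Disjoint (Bs i) (As i))
    (hBcard : ∀ i : Fin (b + 1), (Bs i).card = b - (i : ℕ))
    (hne : ∀ i : Fin (b + 1), (i : ℕ) < b → (OPT \ As i).Nonempty)
    (hgreedy : ∀ i : Fin (b + 1), ∀ Z : Finset V, Disjoint Z (As i) →
      Z.card = b - (i : ℕ) →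
      (1 - 1 / Real.exp 1) * (f (Z ∪ As i) - f (As i)) ≤ f (As i ∪ Bs i) - f (As i))
    (U : Finset V) (hUmem : ∃ i, U = As i ∪ Bs i)
    (hUmax : ∀ i, f (As i ∪ Bs i) ≤ f U) :
    ∀ i : Fin (b + 1),
      f (As i) + (1 - 1 / Real.exp 1) /
          (⌈((OPT \ As i).card : ℝ) / ((b - (i : ℕ) : ℕ) : ℝ)⌉ : ℝ) *
          (f (OPT ∪ As i) - f (As i)) ≤ f U := by
  intro i
  have hAiU : f (As i) ≤ f U :=
    le_trans (hmono (As i) (As i ∪ Bs i) Finset.subset_union_left) (hUmax i)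
  by_cases hib : (i : ℕ) < b
  · set k : ℕ := b - (i : ℕ) with hkdef
    have hk : 0 < k := by omega
    -- apply the partition lemma to S = OPT \ As i
    obtain ⟨P, hPS, hPk, hPbound⟩ := exists_good_part f hmono hsub (As i) k hk
      (OPT \ As i).card (OPT \ As i) rfl
    -- pad P to a set Z of size k disjoint from As i
    have hPdisj : Disjoint P (As i) :=
      Finset.disjoint_of_subset_left hPS Finset.sdiff_disjoint
    have hAAi : (A \ As i).card = k := by
      rw [Finset.card_sdiff_of_subset (hAsub i), hAcard, hAscard]
    have hsubT : P ⊆ P ∪ (A \ As i) := Finset.subset_union_left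
    have hcardT : k ≤ (P ∪ (A \ As i)).card := by
      calc k = (A \ As i).card := hAAi.symm
        _ ≤ (P ∪ (A \ As i)).card :=
          Finset.card_le_card Finset.subset_union_right
    obtain ⟨Z, hPZ, hZT, hZcard⟩ :=
      Finset.exists_subsuperset_card_eq hsubT (n := k - P.card + P.card) (by omega) (by omega)
    have hZk : Z.card = k := by rw [hZcard]; omega
    have hZdisj : Disjoint Z (As i) := by
      refine Finset.disjoint_left.2 fun x hxZ hxA => ?_
      rcases Finset.mem_union.1 (hZT hxZ) with h | h
      · exact (Finset.mem_sdiff.1 (hPS h)).2 hxA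
      · exact (Finset.mem_sdiff.1 h).2 hxA
    have hgr := hgreedy i Z hZdisj hZk
    have hPZf : f (P ∪ As i) ≤ f (Z ∪ As i) :=
      hmono _ _ (Finset.union_subset_union_left hPZ)
    -- positivity of the ceiling
    set c : ℝ := (⌈((OPT \ As i).card : ℝ) / (k : ℝ)⌉ : ℝ) with hcdef
    have hm : 0 < (OPT \ As i).card := Finset.card_pos.2 (hne i hib)
    have hc1 : (1:ℝ) ≤ c := by
      rw [hcdef]
      have : (1:ℤ) ≤ ⌈((OPT \ As i).card : ℝ) / (k : ℝ)⌉ := by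
        apply Int.ceil_pos.2
        apply div_pos
        · exact_mod_cast hm
        · exact_mod_cast hk
      exact_mod_cast this
    have hc0 : (0:ℝ) < c := by linarith
    have he : (0:ℝ) < 1 - 1 / Real.exp 1 := by
      have h1 : (1:ℝ) < Real.exp 1 := by
        have := Real.exp_one_gt_d9; linarith
      have : 1 / Real.exp 1 < 1 := by
        rw [div_lt_one (by linarith)]; exact h1
      linarith
    -- rewrite f ((OPT \ As i) ∪ As i) = f (OPT ∪ As i)
    have hun : (OPT \ As i) ∪ As i = OPT ∪ As i := Finset.sdiff_union_self_eq_union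
    rw [hun] at hPbound
    -- combine
    have hP0 : 0 ≤ f (P ∪ As i) - f (As i) := by
      have := hmono (As i) (P ∪ As i) Finset.subset_union_right
      linarith
    have key : f (OPT ∪ As i) - f (As i) ≤ c * (f (Z ∪ As i) - f (As i)) := by
      calc f (OPT ∪ As i) - f (As i) ≤ c * (f (P ∪ As i) - f (As i)) := hPbound
        _ ≤ c * (f (Z ∪ As i) - f (As i)) := by
            apply mul_le_mul_of_nonneg_left _ hc0.le
            linarith
    have hfinal : (1 - 1 / Real.exp 1) / c * (f (OPT ∪ As i) - f (As i)) ≤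
        f (As i ∪ Bs i) - f (As i) := by
      have h1 : (1 - 1 / Real.exp 1) / c * (f (OPT ∪ As i) - f (As i)) ≤
          (1 - 1 / Real.exp 1) / c * (c * (f (Z ∪ As i) - f (As i))) :=
        mul_le_mul_of_nonneg_left key (div_pos he hc0).le
      have h2 : (1 - 1 / Real.exp 1) / c * (c * (f (Z ∪ As i) - f (As i))) =
          (1 - 1 / Real.exp 1) * (f (Z ∪ As i) - f (As i)) := by
        field_simp
      rw [h2] at h1
      linarith [hgr]
    have := hUmax i
    rw [hcdef] at hfinal
    rw [hkdef] at hfinal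
    linarith
  · -- i = b : the coefficient vanishes
    have hib' : (i : ℕ) = b := by omega
    have hz : b - (i : ℕ) = 0 := by omega
    rw [hz]
    simp only [Nat.cast_zero, div_zero, Int.ceil_zero, Int.cast_zero, div_zero, zero_mul,
      add_zero]
    exact hAiU
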